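/- arXiv:2205.00273 — 2 statements merged into one kernel-verified Lean document; each statement's English description precedes it below -/
import Mathlib

section
/- Let D be a central division algebra of degree n over a field K and let P be a maximal subfield of D (so [P : K] = n). Then P splits D, i.e., D ⊗_K P is isomorphic as a P-algebra to the matrix algebra M_n(P). -/
open scoped TensorProduct

/-- Let `D` be a central division algebra of degree `n` over a field `K` and
let `P` be a maximal subfield of `D` (so `[P : K] = n`), formalized as a field extension
`P/K` together with a `K`-embedding `f : P →ₐ[K] D` whose image is maximal among commutative
`K`-subalgebras of `D`. Then `P` splits `D`:
`D ⊗[K] P ≃ M_n(P)` as `P`-algebras. -/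
theorem maximal_subfield_splits
    (K D : Type) [Field K] [DivisionRing D] [Algebra K D]
    [Algebra.IsCentral K D] [FiniteDimensional K D]
    (n : ℕ) (hn : 0 < n) (hdim : Module.finrank K D = n ^ 2)
    (P : Type) [Field P] [Algebra K P]
    (f : P →ₐ[K] D)
    (hmax : ∀ Q : Subalgebra K D, (∀ x ∈ Q, ∀ y ∈ Q, x * y = y * x) → f.range ≤ Q →
      Q = f.range)
    (hdeg : Module.finrank K P = n) :
    Nonempty ((P ⊗[K] D) ≃ₐ[P] Matrix (Fin n) (Fin n) P) := by
  clear hmax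
  classical
  -- P-module structure on D : p • x = x * f p
  letI : SMul P D := ⟨fun p x => x * f p⟩
  have smul_def' : ∀ (p : P) (x : D), p • x = x * f p := fun _ _ => rfl
  letI : Module P D :=
    { one_smul := fun x => by simp [smul_def']
      mul_smul := fun p q x => by
        show x * f (p * q) = x * f q * f p
        rw [mul_comm p q, map_mul, mul_assoc]
      smul_zero := fun p => by simp [smul_def']
      smul_add := fun p x y => by simp [smul_def', add_mul]
      add_smul := fun p q x => by simp [smul_def', mul_add]
      zero_smul := fun x => by simp [smul_def'] }
  haveI : IsScalarTower K P D :=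
    ⟨fun k p x => by
      show x * f (k • p) = k • (x * f p)
      rw [map_smul, mul_smul_comm]⟩
  haveI : SMulCommClass P K D :=
    ⟨fun p k x => by
      simp only [smul_def', Algebra.smul_def, mul_assoc]⟩
  -- left multiplication as algebra map
  let L : D →ₐ[K] Module.End P D :=
  { toFun := fun d =>
      { toFun := fun x => d * x
        map_add' := fun x y => mul_add d x y
        map_smul' := fun p x => by simp [smul_def', mul_assoc] }
    map_one' := LinearMap.ext fun x => one_mul x
    map_mul' := fun a b => LinearMap.ext fun x => mul_assoc a b x
    map_zero' := LinearMap.ext fun x => zero_mul x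
    map_add' := fun a b => LinearMap.ext fun x => add_mul a b x
    commutes' := fun k => LinearMap.ext fun x => by
      simp only [LinearMap.coe_mk, AddHom.coe_mk]
      rw [Module.algebraMap_end_apply]
      show algebraMap K D k * x = k • x
      rw [Algebra.smul_def] }
  have hLapp : ∀ (d x : D), L d x = d * x := fun _ _ => rfl
  -- the main algebra hom
  let ψ : P ⊗[K] D →ₐ[P] Module.End P D :=
    Algebra.TensorProduct.lift (Algebra.ofId P _) L (fun p d => by
      apply LinearMap.ext fun x => ?_
      show (Algebra.ofId P _ p * L d) x = (L d * Algebra.ofId P _ p) x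
      simp only [Algebra.ofId_apply, Module.End.mul_apply, Module.algebraMap_end_apply,
        hLapp, smul_def', mul_assoc])
  have hψ : ∀ (p : P) (d : D), ψ (p ⊗ₜ[K] d) = Algebra.ofId P _ p * L d := fun p d =>
    Algebra.TensorProduct.lift_tmul _ _ _ _ _
  -- coordinates
  let b := Module.Basis.ofVectorSpace K P
  let ρ : (P ⊗[K] D) ≃ₗ[K] (Module.Basis.ofVectorSpaceIndex K P →₀ D) :=
    (TensorProduct.congr b.repr (LinearEquiv.refl K D)).trans
      (TensorProduct.finsuppScalarLeft K D _)
  have hρ : ∀ (p : P) (d : D) j, ρ (p ⊗ₜ[K] d) j = b.repr p j • d := by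
    intro p d j
    simp [ρ, TensorProduct.finsuppScalarLeft_apply_tmul_apply]
  have hρl : ∀ (x : D) (t : P ⊗[K] D) j, ρ ((1 ⊗ₜ[K] x) * t) j = x * ρ t j := by
    intro x t j
    induction t using TensorProduct.induction_on with
    | zero => simp
    | tmul p d =>
      rw [Algebra.TensorProduct.tmul_mul_tmul, one_mul, hρ, hρ, mul_smul_comm]
    | add s t hs ht => rw [mul_add, map_add, Finsupp.add_apply, hs, ht, map_add,
        Finsupp.add_apply, mul_add]
  have hρr : ∀ (x : D) (t : P ⊗[K] D) j, ρ (t * (1 ⊗ₜ[K] x)) j = ρ t j * x := by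
    intro x t j
    induction t using TensorProduct.induction_on with
    | zero => simp
    | tmul p d =>
      rw [Algebra.TensorProduct.tmul_mul_tmul, mul_one, hρ, hρ, smul_mul_assoc]
    | add s t hs ht => rw [add_mul, map_add, Finsupp.add_apply, hs, ht, map_add,
        Finsupp.add_apply, add_mul]
  -- injectivity of ψ
  have key : ∀ s : Finset (Module.Basis.ofVectorSpaceIndex K P), ∀ t : P ⊗[K] D,
      ψ t = 0 → (ρ t).support ⊆ s → t = 0 := by
    intro s
    induction s using Finset.strongInduction with
    | _ s ih =>
      intro t ht hsupp
      by_contra hne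
      have h1 : (ρ t).support.Nonempty := by
        rw [Finsupp.support_nonempty_iff]
        intro h
        exact hne (by simpa using congrArg ρ.symm h)
      obtain ⟨j₀, hj₀⟩ := h1
      have hdne : ρ t j₀ ≠ 0 := Finsupp.mem_support_iff.mp hj₀
      set u := t * (1 ⊗ₜ[K] (ρ t j₀)⁻¹) with hu
      have hψu : ψ u = 0 := by rw [hu, map_mul, ht, zero_mul]
      have hρu : ∀ j, ρ u j = ρ t j * (ρ t j₀)⁻¹ := fun j => hρr _ t j
      have hj₀u : ρ u j₀ = 1 := by rw [hρu, mul_inv_cancel₀ hdne]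
      have hcomm : ∀ (x : D) (j : _), x * ρ u j = ρ u j * x := by
        intro x
        have hv : ψ ((1 ⊗ₜ[K] x) * u - u * (1 ⊗ₜ[K] x)) = 0 := by
          simp only [hu, map_sub, map_mul, ht, zero_mul, mul_zero, sub_zero]
        have hρv : ∀ j, ρ ((1 ⊗ₜ[K] x) * u - u * (1 ⊗ₜ[K] x)) j
            = x * ρ u j - ρ u j * x := by
          intro j
          rw [map_sub, Finsupp.sub_apply, hρl x u j, hρr x u j]
        have hvs : (ρ ((1 ⊗ₜ[K] x) * u - u * (1 ⊗ₜ[K] x))).support ⊆ s.erase j₀ := by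
          intro j hj
          rw [Finsupp.mem_support_iff, hρv] at hj
          have hjne : ρ u j ≠ 0 := by
            intro h; rw [h] at hj; simp at hj
          have hjt : ρ t j ≠ 0 := by
            intro h; exact hjne (by rw [hρu, h, zero_mul])
          refine Finset.mem_erase.mpr ⟨?_, hsupp (Finsupp.mem_support_iff.mpr hjt)⟩
          intro hjj
          rw [hjj, hj₀u] at hj
          simp at hj
        have h0 := ih (s.erase j₀) (Finset.erase_ssubset (hsupp hj₀)) _ hv hvs
        intro j
        have := congrArg (fun w => ρ w j) h0
        simp only [map_zero, Finsupp.coe_zero, Pi.zero_apply, hρv] at this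
        exact sub_eq_zero.mp this
      have hk : ∀ j, ∃ k : K, algebraMap K D k = ρ u j := by
        intro j
        have hc : ρ u j ∈ Subalgebra.center K D :=
          Subalgebra.mem_center_iff.mpr fun x => hcomm x j
        have hle : Subalgebra.center K D ≤ ⊥ := Algebra.IsCentral.out
        exact Algebra.mem_bot.mp (hle hc)
      choose k hkk using hk
      set q : P := (ρ u).support.sum fun j => k j • b j with hqdef
      have hreprq : ∀ j, algebraMap K D (b.repr q j) = ρ u j := by
        intro j
        have : b.repr q = (ρ u).support.sum fun i => Finsupp.single i (k i) := by
          rw [hqdef, map_sum]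
          congr 1; funext i
          rw [map_smul, Module.Basis.repr_self, Finsupp.smul_single, smul_eq_mul, mul_one]
        rw [this]
        rw [Finsupp.finset_sum_apply]
        by_cases hmem : j ∈ (ρ u).support
        · rw [Finset.sum_eq_single j (fun i _ hij => Finsupp.single_eq_of_ne' hij)
            (fun h => absurd hmem h), Finsupp.single_eq_same, hkk]
        · rw [Finset.sum_eq_zero, map_zero]
          · exact (Finsupp.notMem_support_iff.mp hmem).symm
          · intro i hi
            exact Finsupp.single_eq_of_ne' (fun hij => hmem (hij ▸ hi))
      have huq : u = q ⊗ₜ[K] (1 : D) := by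
        apply ρ.injective
        ext j
        rw [hρ, ← Algebra.algebraMap_eq_smul_one, hreprq j]
      have hfq : f q = 0 := by
        have h1 : ψ u 1 = 0 := by rw [hψu]; rfl
        rw [huq, hψ, Module.End.mul_apply, hLapp, one_mul, Algebra.ofId_apply,
          Module.algebraMap_end_apply, smul_def', one_mul] at h1
        exact h1
      have hq0 : q = 0 := by
        by_contra hq
        have : f q * f q⁻¹ = 1 := by rw [← map_mul, mul_inv_cancel₀ hq, map_one]
        rw [hfq, zero_mul] at this
        exact zero_ne_one this
      rw [hq0, TensorProduct.zero_tmul] at huq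
      rw [huq, map_zero] at hj₀u
      simp at hj₀u
  have hinj : Function.Injective ψ := by
    rw [injective_iff_map_eq_zero]
    intro t ht
    exact key (ρ t).support t ht le_rfl
  -- dimension count
  haveI : FiniteDimensional K P := FiniteDimensional.of_finrank_pos (hdeg ▸ hn)
  haveI : FiniteDimensional P D := Module.Finite.of_restrictScalars_finite K P D
  have hPD : Module.finrank P D = n := by
    have h := Module.finrank_mul_finrank K P D
    rw [hdeg, hdim, pow_two] at h
    exact Nat.eq_of_mul_eq_mul_left hn h
  have hfr1 : Module.finrank P (P ⊗[K] D) = n ^ 2 := by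
    rw [Module.finrank_baseChange, hdim]
  have hfr2 : Module.finrank P (Module.End P D) = n ^ 2 := by
    rw [Module.finrank_linearMap, hPD, pow_two]
  have hsurj : Function.Surjective ψ := by
    have := (LinearMap.injective_iff_surjective_of_finrank_eq_finrank
      (f := ψ.toLinearMap) (hfr1.trans hfr2.symm)).mp hinj
    exact this
  let e1 : (P ⊗[K] D) ≃ₐ[P] Module.End P D := AlgEquiv.ofBijective ψ ⟨hinj, hsurj⟩
  let bD := (Module.finBasis P D).reindex (finCongr hPD)
  exact ⟨e1.trans (algEquivMatrix bD)⟩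
end

section
/- Let D be a central division algebra of degree n over a field K and let P/K be a field extension of degree n. Then P admits a K-algebra embedding into D if and only if P splits D, i.e., D ⊗_K P ≅ M_n(P) as P-algebras. -/
open scoped TensorProduct


theorem artin_indep {K D ι : Type*} [Field K] [DivisionRing D] [Algebra K D]
    [Algebra.IsCentral K D] (cs : ι → D) (hcs : LinearIndependent K cs)
    (s : Finset ι) (ds : ι → D)
    (h : ∀ v : D, ∑ i ∈ s, ds i * v * cs i = 0) : ∀ i ∈ s, ds i = 0 := by
  classical
  induction s using Finset.strongInductionOn generalizing ds with
  | _ s IH =>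
    by_contra hcon
    push_neg at hcon
    obtain ⟨j, hj, hdj⟩ := hcon
    set e : ι → D := fun i => (ds j)⁻¹ * ds i with he
    have hej : e j = 1 := by simp [he, inv_mul_cancel₀ hdj]
    have h' : ∀ v : D, ∑ i ∈ s, e i * v * cs i = 0 := by
      intro v
      have := congrArg (fun x => (ds j)⁻¹ * x) (h v)
      simpa [Finset.mul_sum, mul_assoc, he] using this
    have hcomm : ∀ i ∈ s, ∀ w : D, e i * w - w * e i = 0 := by
      intro i hi w
      rcases eq_or_ne i j with rfl | hij
      · simp [hej]
      · have hsub : ∀ v : D, ∑ k ∈ s.erase j, (e k * w - w * e k) * v * cs k = 0 := by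
          intro v
          have h1 : ∑ k ∈ s, (e k * w - w * e k) * v * cs k
              = (∑ k ∈ s, e k * (w * v) * cs k) - w * ∑ k ∈ s, e k * v * cs k := by
            rw [Finset.mul_sum, ← Finset.sum_sub_distrib]
            refine Finset.sum_congr rfl fun k _ => ?_
            noncomm_ring
          rw [h' (w * v), h' v, mul_zero, sub_zero] at h1
          have h2 : ∑ k ∈ s, (e k * w - w * e k) * v * cs k
              = ∑ k ∈ s.erase j, (e k * w - w * e k) * v * cs k := by
            rw [← Finset.sum_erase_add s _ hj, hej]
            simp
          rw [← h2, h1]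
        exact IH (s.erase j) (Finset.erase_ssubset hj) _ hsub i
          (Finset.mem_erase.mpr ⟨hij, hi⟩)
    -- each e i is central, hence in K
    have hcentral : ∀ i ∈ s, ∃ k : K, algebraMap K D k = e i := by
      intro i hi
      have : e i ∈ Subalgebra.center K D := by
        rw [Subalgebra.mem_center_iff]
        intro w
        exact (sub_eq_zero.mp (hcomm i hi w)).symm
      rw [Algebra.IsCentral.center_eq_bot K D, Algebra.mem_bot] at this
      obtain ⟨k, hk⟩ := this
      exact ⟨k, hk⟩
    choose! k hk using hcentral
    have hsum : ∑ i ∈ s, k i • cs i = 0 := by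
      have := h' 1
      rw [← this]
      refine Finset.sum_congr rfl fun i hi => ?_
      rw [mul_one, ← hk i hi, Algebra.smul_def]
    have hkj : k j = 0 := linearIndependent_iff'.mp hcs s k hsum j hj
    have : (1 : D) = 0 := by
      rw [← hej, ← hk j hj, hkj, map_zero]
    exact one_ne_zero this

theorem forward_dir
    (K D : Type) [Field K] [DivisionRing D] [Algebra K D]
    [Algebra.IsCentral K D] [FiniteDimensional K D]
    (n : ℕ) (hn : 0 < n) (hdim : Module.finrank K D = n ^ 2)
    (P : Type) [Field P] [Algebra K P] (hdeg : Module.finrank K P = n)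
    (f : P →ₐ[K] D) (hf : Function.Injective f) :
    Nonempty ((P ⊗[K] D) ≃ₐ[P] Matrix (Fin n) (Fin n) P) := by
  classical
  -- P-module structure on D : p • d = d * f p
  letI modP : Module P D :=
    { smul := fun p d => d * f p
      one_smul := fun d => by show d * f 1 = d; rw [map_one, mul_one]
      mul_smul := fun p q d => by
        show d * f (p * q) = (d * f q) * f p
        rw [mul_comm p q, map_mul, mul_assoc]
      smul_zero := fun p => zero_mul _
      smul_add := fun p d d' => add_mul _ _ _
      add_smul := fun p q d => by
        show d * f (p + q) = d * f p + d * f q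
        rw [map_add, mul_add]
      zero_smul := fun d => by show d * f 0 = 0; rw [map_zero, mul_zero] }
  have hsmul : ∀ (p : P) (d : D), p • d = d * f p := fun _ _ => rfl
  haveI towKPD : IsScalarTower K P D :=
    ⟨fun k p d => by
      rw [hsmul, hsmul, Algebra.smul_def k p, map_mul, AlgHom.commutes,
        ← Algebra.smul_def, ← mul_smul_comm]⟩
  haveI commPKD : SMulCommClass P K D :=
    ⟨fun p k d => by rw [hsmul, hsmul, smul_mul_assoc]⟩
  haveI finPD : Module.Finite P D := Module.Finite.of_restrictScalars_finite K P D
  -- the endomorphism algebra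
  set C := Module.End P D with hC
  -- left multiplication as an algebra hom D →ₐ[K] C
  have lmulP : ∀ d : D, ∀ (p : P) (v : D), d * (p • v) = p • (d * v) := by
    intro d p v; rw [hsmul, hsmul, mul_assoc]
  set lm : D → C := fun d =>
    { toFun := fun v => d * v
      map_add' := fun v w => mul_add d v w
      map_smul' := fun p v => (lmulP d p v) } with hlm
  set g : D →ₐ[K] C :=
    { toFun := lm
      map_one' := by ext v; show (1 : D) * v = v; rw [one_mul]
      map_mul' := fun d d' => by ext v; show (d * d') * v = d * (d' * v); rw [mul_assoc]
      map_zero' := by ext v; show (0 : D) * v = 0; rw [zero_mul]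
      map_add' := fun d d' => by ext v; show (d + d') * v = d * v + d' * v; rw [add_mul]
      commutes' := fun k => by
        ext v
        show algebraMap K D k * v = _
        rw [Algebra.algebraMap_eq_smul_one (A := C), LinearMap.smul_apply,
          Module.End.one_apply, ← Algebra.smul_def] } with hg
  have hcomm : ∀ (p : P) (d : D), Commute (Algebra.ofId P C p) (g d) := by
    intro p d
    have hap : ∀ v : D, Algebra.ofId P C p v = p • v := by
      intro v
      show algebraMap P C p v = _
      rw [Algebra.algebraMap_eq_smul_one (A := C), LinearMap.smul_apply, Module.End.one_apply]
    ext v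
    show (Algebra.ofId P C p) (g d v) = g d (Algebra.ofId P C p v)
    rw [hap, hap]
    exact (lmulP d p v).symm
  set Φ : P ⊗[K] D →ₐ[P] C := Algebra.TensorProduct.lift (Algebra.ofId P C) g hcomm with hΦ
  -- injectivity
  haveI finKP : FiniteDimensional K P := .of_finrank_pos (hdeg ▸ hn)
  have hinj : Function.Injective Φ := by
    rw [injective_iff_map_eq_zero]
    obtain ⟨b⟩ : Nonempty (Module.Basis (Fin n) K P) := ⟨Module.finBasisOfFinrankEq K P hdeg⟩
    have hrep : ∀ x : P ⊗[K] D, ∃ d : Fin n → D, x = ∑ i, b i ⊗ₜ[K] d i := by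
      intro x
      induction x using TensorProduct.induction_on with
      | zero => exact ⟨0, by simp⟩
      | tmul p dd =>
        refine ⟨fun i => b.repr p i • dd, ?_⟩
        conv_lhs => rw [← b.sum_repr p]
        rw [TensorProduct.sum_tmul]
        exact Finset.sum_congr rfl fun i _ => (TensorProduct.smul_tmul _ _ _)
      | add x y hx hy =>
        obtain ⟨dx, rfl⟩ := hx
        obtain ⟨dy, rfl⟩ := hy
        exact ⟨dx + dy, by simp [TensorProduct.tmul_add, Finset.sum_add_distrib]⟩
    intro x hx
    obtain ⟨d, rfl⟩ := hrep x
    have hev : ∀ v : D, ∑ i, d i * v * f (b i) = 0 := by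
      intro v
      have : Φ (∑ i, b i ⊗ₜ[K] d i) v = 0 := by rw [hx]; rfl
      rw [map_sum] at this
      rw [← this]
      rw [LinearMap.coe_sum, Finset.sum_apply]
      refine Finset.sum_congr rfl fun i _ => ?_
      rw [Algebra.TensorProduct.lift_tmul]
      show d i * v * f (b i) = (Algebra.ofId P C (b i) * g (d i)) v
      rw [Module.End.mul_apply]
      show _ = Algebra.ofId P C (b i) (d i * v)
      rw [show ∀ w : D, Algebra.ofId P C (b i) w = (b i) • w from fun w => by
        show algebraMap P C (b i) w = _
        rw [Algebra.algebraMap_eq_smul_one (A := C), LinearMap.smul_apply, Module.End.one_apply],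
        hsmul]
    have hind : LinearIndependent K (f ∘ b) :=
      b.linearIndependent.map' f.toLinearMap (LinearMap.ker_eq_bot.mpr hf)
    have hzero := artin_indep (f ∘ b) hind Finset.univ d (by simpa using hev)
    have : ∀ i, d i = 0 := fun i => hzero i (Finset.mem_univ i)
    simp [this]
  -- dimension count
  have hPD : Module.finrank P D = n := by
    have := Module.finrank_mul_finrank K P D
    rw [hdeg, hdim, pow_two] at this
    exact Nat.eq_of_mul_eq_mul_left hn this
  have hd1 : Module.finrank P (P ⊗[K] D) = n ^ 2 := by
    rw [Module.finrank_baseChange, hdim]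
  have hd2 : Module.finrank P C = n ^ 2 := by
    show Module.finrank P (D →ₗ[P] D) = n ^ 2
    rw [Module.finrank_linearMap, hPD, pow_two]
  have hsurj : Function.Surjective Φ := by
    have := (LinearMap.injective_iff_surjective_of_finrank_eq_finrank
      (f := Φ.toLinearMap) (by rw [hd1, hd2])).mp hinj
    exact this
  refine ⟨(AlgEquiv.ofBijective Φ ⟨hinj, hsurj⟩).trans (algEquivMatrix ?_)⟩
  exact Module.finBasisOfFinrankEq P D hPD

theorem backward_dir
    (K D : Type) [Field K] [DivisionRing D] [Algebra K D]
    [Algebra.IsCentral K D] [FiniteDimensional K D]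
    (n : ℕ) (hn : 0 < n) (hdim : Module.finrank K D = n ^ 2)
    (P : Type) [Field P] [Algebra K P] (hdeg : Module.finrank K P = n)
    (e : (P ⊗[K] D) ≃ₐ[P] Matrix (Fin n) (Fin n) P) :
    ∃ f : P →ₐ[K] D, Function.Injective f := by
  classical
  haveI finKP : FiniteDimensional K P := .of_finrank_pos (hdeg ▸ hn)
  set V := Fin n → P with hV
  set ρ : D →ₐ[K] Matrix (Fin n) (Fin n) P :=
    (AlgHom.restrictScalars K e.toAlgHom).comp Algebra.TensorProduct.includeRight with hρ
  letI modD : Module D V :=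
    { smul := fun d v => (ρ d).mulVec v
      one_smul := fun v => by show (ρ 1).mulVec v = v; rw [map_one, Matrix.one_mulVec]
      mul_smul := fun d d' v => by
        show (ρ (d * d')).mulVec v = (ρ d).mulVec ((ρ d').mulVec v)
        rw [map_mul, Matrix.mulVec_mulVec]
      smul_zero := fun d => Matrix.mulVec_zero _
      smul_add := fun d v w => Matrix.mulVec_add _ _ _
      add_smul := fun d d' v => by
        show (ρ (d + d')).mulVec v = (ρ d).mulVec v + (ρ d').mulVec v
        rw [map_add, Matrix.add_mulVec]
      zero_smul := fun v => by show (ρ 0).mulVec v = 0; rw [map_zero, Matrix.zero_mulVec] }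
  have hsmul : ∀ (d : D) (v : V), d • v = (ρ d).mulVec v := fun _ _ => rfl
  haveI towKDV : IsScalarTower K D V :=
    ⟨fun k d v => by
      rw [hsmul, hsmul, map_smul, Matrix.smul_mulVec]⟩
  have hcomm' : ∀ (p : P) (d : D) (w : V), p • (d • w) = d • (p • w) := by
    intro p d w
    rw [hsmul, hsmul, Matrix.mulVec_smul]
  haveI finDV : Module.Finite D V := Module.Finite.of_restrictScalars_finite K D V
  have hDV : Module.finrank D V = 1 := by
    have h1 : Module.finrank K V = n ^ 2 := by
      show Module.finrank K (Fin n → P) = n ^ 2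
      rw [Module.finrank_pi_fintype K, Finset.sum_const, Finset.card_univ,
        Fintype.card_fin, hdeg, smul_eq_mul, pow_two]
    have h2 := Module.finrank_mul_finrank K D V
    rw [hdim, h1] at h2
    have hn2 : 0 < n ^ 2 := pow_pos hn 2
    nlinarith [h2]
  set v₀ : V := fun _ => (1 : P) with hv₀def
  have hv₀ : v₀ ≠ 0 := by
    intro h
    have := congrFun h ⟨0, hn⟩
    exact one_ne_zero this
  set ℓ : D →ₗ[D] V :=
    { toFun := fun d => d • v₀
      map_add' := fun a b => add_smul a b v₀
      map_smul' := fun a b => mul_smul a b v₀ } with hℓ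
  have hinj : Function.Injective ℓ := by
    rw [injective_iff_map_eq_zero]
    intro d hd
    by_contra hdne
    apply hv₀
    calc v₀ = (d⁻¹ * d) • v₀ := by rw [inv_mul_cancel₀ hdne, one_smul]
    _ = d⁻¹ • (d • v₀) := mul_smul _ _ _
    _ = d⁻¹ • (0 : V) := by rw [show d • v₀ = 0 from hd]
    _ = 0 := smul_zero _
  have hsurj : Function.Surjective ℓ :=
    (LinearMap.injective_iff_surjective_of_finrank_eq_finrank
      (by rw [Module.finrank_self, hDV])).mp hinj
  set ℓe := LinearEquiv.ofBijective ℓ ⟨hinj, hsurj⟩ with hℓe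
  set g : P → D := fun p => ℓe.symm (p • v₀) with hg
  have hkey : ∀ p : P, g p • v₀ = p • v₀ := by
    intro p
    have : ℓe (ℓe.symm (p • v₀)) = p • v₀ := ℓe.apply_symm_apply _
    exact this
  have huniq : ∀ (p : P) (d : D), d • v₀ = p • v₀ → g p = d := by
    intro p d hd
    apply hinj
    show g p • v₀ = d • v₀
    rw [hkey, hd]
  set F : P →ₐ[K] D :=
    { toFun := g
      map_one' := huniq 1 1 (by rw [one_smul, one_smul])
      map_mul' := fun p q => by
        refine huniq (p * q) (g p * g q) ?_
        rw [mul_smul, hkey q, ← hcomm', hkey p, ← mul_smul, mul_comm q p]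
      map_zero' := huniq 0 0 (by rw [zero_smul, zero_smul])
      map_add' := fun p q => by
        refine huniq (p + q) (g p + g q) ?_
        rw [add_smul, hkey p, hkey q, add_smul]
      commutes' := fun k => by
        refine huniq (algebraMap K P k) (algebraMap K D k) ?_
        rw [algebraMap_smul, algebraMap_smul] }
  exact ⟨F, RingHom.injective (F : P →+* D)⟩


open scoped TensorProduct

/-- Let `D` be a central division algebra of degree `n` over a field `K` and
let `P/K` be a field extension of degree `n`. Then `P` admits a `K`-algebra embedding into
`D` if and only if `P` splits `D`, i.e. `D ⊗[K] P ≃ M_n(P)` as `P`-algebras. -/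
theorem embeds_iff_splits
    (K D : Type) [Field K] [DivisionRing D] [Algebra K D]
    [Algebra.IsCentral K D] [FiniteDimensional K D]
    (n : ℕ) (hn : 0 < n) (hdim : Module.finrank K D = n ^ 2)
    (P : Type) [Field P] [Algebra K P] (hdeg : Module.finrank K P = n) :
    (∃ f : P →ₐ[K] D, Function.Injective f) ↔
      Nonempty ((P ⊗[K] D) ≃ₐ[P] Matrix (Fin n) (Fin n) P) := by
  constructor
  · rintro ⟨f, hf⟩
    exact forward_dir K D n hn hdim P hdeg f hf
  · rintro ⟨e⟩
    exact backward_dir K D n hn hdim P hdeg e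
end
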